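/- Suppose x* ∈ ℝⁿ satisfies weak second-order necessary conditions for min f(x) subject to x ≥ 0, i.e., x* ≥ 0, ∇f(x*) ≥ 0, x*_i [∇f(x*)]_i = 0 for all i, and wᵀ∇²f(x*)w ≥ 0 for all w with w_i = 0 whenever x*_i = 0. Define v* by v*_i = √(x*_i). Then v* satisfies second-order necessary conditions for min_v F(v) := f(v ⊙ v): ∇F(v*) = 0 and ∇²F(v*) is positive semidefinite. -/

import Mathlib

noncomputable def grad {n : ℕ} (f : (Fin n → ℝ) → ℝ) (x : Fin n → ℝ) (i : Fin n) : ℝ :=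
  fderiv ℝ f x (Pi.single i 1)

noncomputable def hessQ {n : ℕ} (f : (Fin n → ℝ) → ℝ) (x w : Fin n → ℝ) : ℝ :=
  fderiv ℝ (fun y => fderiv ℝ f y w) x w

lemma clm_pi_apply {n : ℕ} (L : (Fin n → ℝ) →L[ℝ] ℝ) (w : Fin n → ℝ) :
    L w = ∑ i, w i * L (Pi.single i 1) := by
  conv_lhs => rw [← Finset.univ_sum_single w, map_sum]
  refine Finset.sum_congr rfl fun i _ => ?_
  have h : (Pi.single i (w i) : Fin n → ℝ) = w i • (Pi.single i (1:ℝ) : Fin n → ℝ) := by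
    rw [← Pi.single_smul]; simp
  rw [h, map_smul, smul_eq_mul]

theorem stmt2 {n : ℕ} (f : (Fin n → ℝ) → ℝ) (hf : ContDiff ℝ 2 f)
    (F : (Fin n → ℝ) → ℝ) (hF : ∀ v, F v = f (v * v))
    (xs : Fin n → ℝ)
    (hx : ∀ i, 0 ≤ xs i)
    (hg : ∀ i, 0 ≤ grad f xs i)
    (hcomp : ∀ i, xs i * grad f xs i = 0)
    (h2 : ∀ w : Fin n → ℝ, (∀ i, xs i = 0 → w i = 0) → 0 ≤ hessQ f xs w)
    (vs : Fin n → ℝ) (hv : ∀ i, vs i = Real.sqrt (xs i)) :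
    fderiv ℝ F vs = 0 ∧ ∀ s : Fin n → ℝ, 0 ≤ hessQ F vs s := by
  have hFe : F = fun v => f (v * v) := funext hF
  subst hFe
  have hfd : Differentiable ℝ f := hf.differentiable (by norm_num)
  have hxs : vs * vs = xs := funext fun i => by
    simp only [Pi.mul_apply, hv]; exact Real.mul_self_sqrt (hx i)
  have hvz : ∀ i, xs i = 0 → vs i = 0 := fun i h => by rw [hv, h, Real.sqrt_zero]
  have hvg : ∀ i, vs i * grad f xs i = 0 := fun i => by
    rcases mul_eq_zero.mp (hcomp i) with h | h
    · rw [hvz i h, zero_mul]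
    · rw [h, mul_zero]
  -- derivative of squaring map
  set D : (Fin n → ℝ) → ((Fin n → ℝ) →L[ℝ] (Fin n → ℝ)) := fun v =>
    v • ContinuousLinearMap.id ℝ (Fin n → ℝ) + v • ContinuousLinearMap.id ℝ (Fin n → ℝ) with hD
  have hsq : ∀ v : Fin n → ℝ, HasFDerivAt (fun y : Fin n → ℝ => y * y) (D v) v :=
    fun v => (hasFDerivAt_id v).mul (hasFDerivAt_id v)
  have hDapp : ∀ v t : Fin n → ℝ, D v t = v * t + v * t := fun v t => by
    simp [hD, smul_eq_mul]
  have hFD : ∀ v : Fin n → ℝ,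
      HasFDerivAt (fun y => f (y * y)) ((fderiv ℝ f (v * v)).comp (D v)) v :=
    fun v => by
      have h := HasFDerivAt.comp (f := fun y : Fin n → ℝ => y * y) v ((hfd (v * v)).hasFDerivAt) (hsq v)
      exact h
  constructor
  · rw [(hFD vs).fderiv]
    ext s
    simp only [ContinuousLinearMap.comp_apply, ContinuousLinearMap.zero_apply, hxs, hDapp]
    rw [clm_pi_apply]
    refine Finset.sum_eq_zero fun i _ => ?_
    have h := hvg i
    unfold grad at h
    simp only [Pi.add_apply, Pi.mul_apply]
    linear_combination (2 * s i) * h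
  · intro s
    set G : (Fin n → ℝ) → ((Fin n → ℝ) →L[ℝ] ℝ) := fderiv ℝ f with hGdef
    have hG : ContDiff ℝ 1 G := hf.fderiv_right (le_refl 2)
    have hGd : DifferentiableAt ℝ G xs := (hG.differentiable one_ne_zero).differentiableAt
    set w : Fin n → ℝ := vs * s + vs * s with hw
    -- first-order derivative function of F in direction s
    have hFs : (fun y => fderiv ℝ (fun y => f (y * y)) y s)
        = fun y => (G (y * y)) (y * s + y * s) := by
      funext y
      rw [(hFD y).fderiv]
      simp only [ContinuousLinearMap.comp_apply, hDapp, hGdef]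
    have hc : HasFDerivAt (fun y : Fin n → ℝ => G (y * y))
        ((fderiv ℝ G xs).comp (D vs)) vs := by
      have h := hGd.hasFDerivAt
      rw [← hxs] at h
      have h2 := HasFDerivAt.comp (f := fun y : Fin n → ℝ => y * y) vs h (hsq vs)
      rw [hxs] at h2
      exact h2
    have hu : HasFDerivAt (fun y : Fin n → ℝ => y * s + y * s) (D s) vs := by
      have h := (D s).hasFDerivAt (x := vs)
      have he : ⇑(D s) = fun y : Fin n → ℝ => y * s + y * s := by
        funext y; rw [hDapp]; ring
      rwa [he] at h
    have happ := hc.clm_apply hu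
    have hval : hessQ (fun y => f (y * y)) vs s
        = (G xs) (s * s + s * s) + (fderiv ℝ G xs w) w := by
      unfold hessQ
      rw [hFs, happ.fderiv]
      simp only [ContinuousLinearMap.add_apply, ContinuousLinearMap.comp_apply,
        ContinuousLinearMap.flip_apply, hDapp, hxs, hw]
    have hQw : hessQ f xs w = (fderiv ℝ G xs w) w := by
      unfold hessQ
      have h := hGd.hasFDerivAt.clm_apply (hasFDerivAt_const w xs)
      rw [h.fderiv]
      simp [hGdef]
    have hwz : ∀ i, xs i = 0 → w i = 0 := fun i h => by
      simp [hw, hvz i h]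
    have hterm1 : 0 ≤ (G xs) (s * s + s * s) := by
      rw [clm_pi_apply]
      refine Finset.sum_nonneg fun i _ => ?_
      have := hg i
      unfold grad at this
      simp only [Pi.add_apply, Pi.mul_apply]
      nlinarith [sq_nonneg (s i)]
    have hterm2 := h2 w hwz
    rw [hval]
    rw [hQw] at hterm2
    linarith
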